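/- Let X be a Banach space over 𝕂 = ℝ or ℂ. For every k ≥ 1, the set of strong norm-attainment points of bounded k-homogeneous polynomials on X is contained in the set of strong norm-attainment points of bounded (k+1)-homogeneous polynomials: ρ̃𝒫(ᵏX) ⊆ ρ̃𝒫(ᵏ⁺¹X). In particular, sexp(B_X) = ρ̃𝒫(¹X) ⊆ ρ̃𝒫(²X) ⊆ ⋯. -/

import Mathlib

open Metric Filter Topology Set

/-- The sup norm of a function over the closed unit ball. -/
noncomputable def supNorm {X Y : Type*} [NormedAddCommGroup X] [NormedAddCommGroup Y]
    (f : X → Y) : ℝ :=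
  sSup ((fun x => ‖f x‖) '' Metric.closedBall (0 : X) 1)

/-- `f` strongly attains its (sup) norm at `x₀`: every maximizing sequence in the closed unit
ball has a subsequence converging to a unimodular multiple of `x₀`. -/
def StronglyAttains (𝕂 : Type*) [RCLike 𝕂] {X Y : Type*} [NormedAddCommGroup X]
    [NormedSpace 𝕂 X] [NormedAddCommGroup Y] (f : X → Y) (x₀ : X) : Prop :=
  ∀ xs : ℕ → X, (∀ n, xs n ∈ Metric.closedBall (0 : X) 1) →
    Tendsto (fun n => ‖f (xs n)‖) atTop (nhds (supNorm f)) →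
    ∃ (α : 𝕂) (φ : ℕ → ℕ), StrictMono φ ∧ ‖α‖ = 1 ∧
      Tendsto (fun n => xs (φ n)) atTop (nhds (α • x₀))

/-- The `k`-homogeneous polynomial associated to a continuous `k`-multilinear map. -/
noncomputable def polyEval {𝕂 : Type*} [RCLike 𝕂] {X Y : Type*} [NormedAddCommGroup X]
    [NormedSpace 𝕂 X] [NormedAddCommGroup Y] [NormedSpace 𝕂 Y] {k : ℕ}
    (L : ContinuousMultilinearMap 𝕂 (fun _ : Fin k => X) Y) : X → Y :=
  fun x => L (fun _ => x)

/-- The set `ρ̃𝒫(ᵏX)` of points of the closed unit ball at which some nonzero bounded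
`k`-homogeneous scalar polynomial strongly attains its norm. -/
def polyAttainPts (𝕂 : Type*) [RCLike 𝕂] (X : Type*) [NormedAddCommGroup X]
    [NormedSpace 𝕂 X] (k : ℕ) : Set X :=
  {x₀ | x₀ ∈ Metric.closedBall (0 : X) 1 ∧
    ∃ L : ContinuousMultilinearMap 𝕂 (fun _ : Fin k => X) 𝕂,
      polyEval L ≠ 0 ∧ StronglyAttains 𝕂 (polyEval L) x₀}

/-- Numerical radius `v(f) = sup { |x*(f x)| : (x, x*) ∈ Π(X) }`. -/
noncomputable def numRadius (𝕂 : Type*) [RCLike 𝕂] {X : Type*} [NormedAddCommGroup X]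
    [NormedSpace 𝕂 X] (f : X → X) : ℝ :=
  sSup {r | ∃ (x : X) (x' : X →L[𝕂] 𝕂), ‖x‖ = 1 ∧ ‖x'‖ = 1 ∧ x' x = 1 ∧ r = ‖x' (f x)‖}

/-- The `k`-polynomial numerical index `n^(k)(X)`. -/
noncomputable def polyNumIndex (𝕂 : Type*) [RCLike 𝕂] (X : Type*) [NormedAddCommGroup X]
    [NormedSpace 𝕂 X] (k : ℕ) : ℝ :=
  sInf {r | ∃ L : ContinuousMultilinearMap 𝕂 (fun _ : Fin k => X) X,
    supNorm (polyEval L) = 1 ∧ r = numRadius 𝕂 (polyEval L)}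

/-- The numerical index `n(X)` of a Banach space. -/
noncomputable def numIndex (𝕂 : Type*) [RCLike 𝕂] (X : Type*) [NormedAddCommGroup X]
    [NormedSpace 𝕂 X] : ℝ :=
  sInf {r | ∃ T : X →L[𝕂] X, ‖T‖ = 1 ∧ r = numRadius 𝕂 (⇑T)}

/-- `x` is an extreme point of the convex set `s` : `y + z = 2x` with `y, z ∈ s` forces
`y = z = x`. -/
def IsExtremePt {E : Type*} [AddCommGroup E] (s : Set E) (x : E) : Prop :=
  x ∈ s ∧ ∀ y ∈ s, ∀ z ∈ s, y + z = x + x → y = x ∧ z = x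

/-- `x` is a strongly exposed point of the closed unit ball. -/
def StronglyExposedPt (𝕂 : Type*) [RCLike 𝕂] {X : Type*} [NormedAddCommGroup X]
    [NormedSpace 𝕂 X] (x : X) : Prop :=
  x ∈ Metric.closedBall (0 : X) 1 ∧ ∃ x' : X →L[𝕂] 𝕂, x' ≠ 0 ∧ ‖x'‖ ≤ 1 ∧
    (∀ y ∈ Metric.closedBall (0 : X) 1, RCLike.re (x' y) ≤ RCLike.re (x' x)) ∧
    ∀ xs : ℕ → X, (∀ n, xs n ∈ Metric.closedBall (0 : X) 1) →
      Tendsto (fun n => RCLike.re (x' (xs n))) atTop (nhds (RCLike.re (x' x))) →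
      Tendsto xs atTop (nhds x)

/-- `x'` is a weak-* exposed point of the dual unit ball. -/
def WeakStarExposed (𝕂 : Type*) [RCLike 𝕂] {X : Type*} [NormedAddCommGroup X]
    [NormedSpace 𝕂 X] (x' : X →L[𝕂] 𝕂) : Prop :=
  ‖x'‖ ≤ 1 ∧ ∃ x ∈ Metric.closedBall (0 : X) 1, x' x = 1 ∧
    ∀ y' : X →L[𝕂] 𝕂, ‖y'‖ ≤ 1 → y' x = 1 → y' = x'

/-- `f` is a strong peak function at `x₀`: `f` is nonzero on the ball and every maximizing
sequence in the closed unit ball converges to `x₀`. -/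
def StrongPeakAt {X Y : Type*} [NormedAddCommGroup X] [NormedAddCommGroup Y]
    (f : X → Y) (x₀ : X) : Prop :=
  (∃ x ∈ Metric.closedBall (0 : X) 1, f x ≠ 0) ∧
    ∀ xs : ℕ → X, (∀ n, xs n ∈ Metric.closedBall (0 : X) 1) →
      Tendsto (fun n => ‖f (xs n)‖) atTop (nhds (supNorm f)) →
      Tendsto xs atTop (nhds x₀)

/-- Complex extreme point of the closed unit ball. -/
def ComplexExtremePoint {X : Type*} [NormedAddCommGroup X] [NormedSpace ℂ X] (x : X) : Prop :=
  x ∈ Metric.closedBall (0 : X) 1 ∧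
    ∀ y : X, (∀ θ : ℝ, ‖x + Complex.exp (θ * Complex.I) • y‖ ≤ 1) → y = 0

/-- Membership in `A_b(B_X : Y)`: bounded, continuous on the closed unit ball and
holomorphic on the open unit ball. -/
def MemAb {X Y : Type*} [NormedAddCommGroup X] [NormedSpace ℂ X] [NormedAddCommGroup Y]
    [NormedSpace ℂ Y] (f : X → Y) : Prop :=
  ContinuousOn f (Metric.closedBall (0 : X) 1) ∧
    (∃ C, ∀ x ∈ Metric.closedBall (0 : X) 1, ‖f x‖ ≤ C) ∧
    DifferentiableOn ℂ f (Metric.ball (0 : X) 1)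

/-- Membership in `A_u(B_X : Y)`: additionally uniformly continuous on the closed ball. -/
def MemAu {X Y : Type*} [NormedAddCommGroup X] [NormedSpace ℂ X] [NormedAddCommGroup Y]
    [NormedSpace ℂ Y] (f : X → Y) : Prop :=
  MemAb f ∧ UniformContinuousOn f (Metric.closedBall (0 : X) 1)

/-- The set `ρA_u(B_X)` of strong peak points of `A_u(B_X)`. -/
def strongPeakPtsAu (X : Type*) [NormedAddCommGroup X] [NormedSpace ℂ X] : Set X :=
  {x₀ | ∃ f : X → ℂ, MemAu f ∧ StrongPeakAt f x₀}

/-- The holomorphic numerical index `n_u(X)`. -/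
noncomputable def holNumIndex (X : Type*) [NormedAddCommGroup X] [NormedSpace ℂ X] : ℝ :=
  sInf {r | ∃ f : X → X, MemAu f ∧ supNorm f = 1 ∧ r = numRadius ℂ f}

section Helpers

variable {𝕂 X : Type*} [RCLike 𝕂] [NormedAddCommGroup X] [NormedSpace 𝕂 X]

lemma aux_le_supNorm {Y : Type*} [NormedAddCommGroup Y] {f : X → Y} {C : ℝ}
    (hC : ∀ x ∈ closedBall (0:X) 1, ‖f x‖ ≤ C) {x : X} (hx : x ∈ closedBall (0:X) 1) :
    ‖f x‖ ≤ supNorm f :=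
  le_csSup ⟨C, by rintro r ⟨y, hy, rfl⟩; exact hC y hy⟩ ⟨x, hx, rfl⟩

lemma aux_supNorm_le {Y : Type*} [NormedAddCommGroup Y] {f : X → Y} {C : ℝ}
    (hC : ∀ x ∈ closedBall (0:X) 1, ‖f x‖ ≤ C) : supNorm f ≤ C :=
  csSup_le ⟨‖f 0‖, 0, by simp, rfl⟩ (by rintro r ⟨y, hy, rfl⟩; exact hC y hy)

lemma aux_max_seq {Y : Type*} [NormedAddCommGroup Y] (f : X → Y) {C : ℝ}
    (hC : ∀ x ∈ closedBall (0:X) 1, ‖f x‖ ≤ C) :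
    ∃ xs : ℕ → X, (∀ n, xs n ∈ closedBall (0:X) 1) ∧
      Tendsto (fun n => ‖f (xs n)‖) atTop (nhds (supNorm f)) := by
  have hne : ((fun x => ‖f x‖) '' closedBall (0:X) 1).Nonempty :=
    ⟨‖f 0‖, 0, by simp, rfl⟩
  have hbdd : BddAbove ((fun x => ‖f x‖) '' closedBall (0:X) 1) :=
    ⟨C, by rintro r ⟨y, hy, rfl⟩; exact hC y hy⟩
  obtain ⟨u, -, hu, hmem⟩ := exists_seq_tendsto_sSup hne hbdd
  choose g hg hgu using hmem
  refine ⟨g, hg, ?_⟩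
  have hfg : (fun n => ‖f (g n)‖) = u := funext hgu
  rw [hfg]; exact hu

variable {k : ℕ}

lemma aux_polyEval_bound (L : ContinuousMultilinearMap 𝕂 (fun _ : Fin k => X) 𝕂) :
    ∀ x ∈ closedBall (0:X) 1, ‖polyEval L x‖ ≤ ‖L‖ := by
  intro x hx
  have h1 : ‖x‖ ≤ 1 := by simpa using hx
  calc ‖polyEval L x‖ ≤ ‖L‖ * ∏ _i : Fin k, ‖x‖ := L.le_opNorm _
    _ ≤ ‖L‖ * 1 := by
        refine mul_le_mul_of_nonneg_left ?_ (norm_nonneg L)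
        rw [Finset.prod_const]
        exact pow_le_one₀ (norm_nonneg x) h1
    _ = ‖L‖ := mul_one _

lemma aux_polyEval_smul (L : ContinuousMultilinearMap 𝕂 (fun _ : Fin k => X) 𝕂)
    (c : 𝕂) (x : X) : polyEval L (c • x) = c ^ k • polyEval L x := by
  have h := L.map_smul_univ (fun _ : Fin k => c) (fun _ => x)
  simpa [polyEval, Finset.prod_const] using h

lemma aux_polyEval_cont (L : ContinuousMultilinearMap 𝕂 (fun _ : Fin k => X) 𝕂) :
    Continuous (polyEval L) :=
  L.coe_continuous.comp (continuous_pi fun _ => continuous_id)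

lemma aux_strong_norm_eq {L : ContinuousMultilinearMap 𝕂 (fun _ : Fin k => X) 𝕂} {x₀ : X}
    (hSA : StronglyAttains 𝕂 (polyEval L) x₀) :
    ‖polyEval L x₀‖ = supNorm (polyEval L) := by
  obtain ⟨xs, hxs, hten⟩ := aux_max_seq (polyEval L) (aux_polyEval_bound L)
  obtain ⟨α, φ, hφ, hα, hconv⟩ := hSA xs hxs hten
  have h1 : Tendsto (fun n => ‖polyEval L (xs (φ n))‖) atTop
      (nhds ‖polyEval L (α • x₀)‖) :=
    ((continuous_norm.comp (aux_polyEval_cont L)).tendsto _).comp hconv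
  have h2 : Tendsto (fun n => ‖polyEval L (xs (φ n))‖) atTop
      (nhds (supNorm (polyEval L))) := hten.comp hφ.tendsto_atTop
  have h3 := tendsto_nhds_unique h1 h2
  rwa [aux_polyEval_smul, norm_smul, norm_pow, hα, one_pow, one_mul] at h3

lemma aux_supNorm_pos {L : ContinuousMultilinearMap 𝕂 (fun _ : Fin k => X) 𝕂}
    (hL : polyEval L ≠ 0) : 0 < supNorm (polyEval L) := by
  obtain ⟨x, hx⟩ : ∃ x, polyEval L x ≠ 0 := by
    by_contra h; push_neg at h; exact hL (funext h)
  by_cases h1 : ‖x‖ ≤ 1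
  · calc (0:ℝ) < ‖polyEval L x‖ := norm_pos_iff.2 hx
      _ ≤ supNorm (polyEval L) :=
        aux_le_supNorm (aux_polyEval_bound L) (by simpa using h1)
  · push_neg at h1
    have hx0 : x ≠ 0 := by
      intro h; rw [h, norm_zero] at h1; linarith
    set c : 𝕂 := (‖x‖ : 𝕂)⁻¹ with hc
    have hcne : c ≠ 0 := by
      simp [hc, RCLike.ofReal_ne_zero, norm_ne_zero_iff.2 hx0]
    have hyball : c • x ∈ closedBall (0:X) 1 := by
      rw [mem_closedBall_zero_iff, norm_smul, hc, norm_inv, RCLike.norm_ofReal,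
        abs_of_nonneg (norm_nonneg x), inv_mul_cancel₀ (norm_ne_zero_iff.2 hx0)]
    have hy : polyEval L (c • x) ≠ 0 := by
      rw [aux_polyEval_smul]
      exact smul_ne_zero (pow_ne_zero _ hcne) hx
    calc (0:ℝ) < ‖polyEval L (c • x)‖ := norm_pos_iff.2 hy
      _ ≤ supNorm (polyEval L) := aux_le_supNorm (aux_polyEval_bound L) hyball

lemma aux_norm_x₀_one {L : ContinuousMultilinearMap 𝕂 (fun _ : Fin k => X) 𝕂} {x₀ : X}
    (hk : 1 ≤ k) (hL : polyEval L ≠ 0) (hSA : StronglyAttains 𝕂 (polyEval L) x₀)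
    (hball : x₀ ∈ closedBall (0:X) 1) : ‖x₀‖ = 1 := by
  have hM := aux_strong_norm_eq hSA
  have hpos := aux_supNorm_pos hL
  have hle : ‖x₀‖ ≤ 1 := by simpa using hball
  have hx0 : x₀ ≠ 0 := by
    intro h
    have : polyEval L x₀ = 0 := by
      rw [h]
      exact L.map_coord_zero ⟨0, hk⟩ rfl
    rw [this, norm_zero] at hM
    linarith
  by_contra hne
  have hlt : ‖x₀‖ < 1 := lt_of_le_of_ne hle hne
  have hnpos : (0:ℝ) < ‖x₀‖ := norm_pos_iff.2 hx0
  set c : 𝕂 := (‖x₀‖ : 𝕂)⁻¹ with hc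
  have hyball : c • x₀ ∈ closedBall (0:X) 1 := by
    rw [mem_closedBall_zero_iff, norm_smul, hc, norm_inv, RCLike.norm_ofReal,
      abs_of_nonneg (norm_nonneg x₀), inv_mul_cancel₀ (ne_of_gt hnpos)]
  have hval : ‖polyEval L (c • x₀)‖ = (‖x₀‖⁻¹) ^ k * ‖polyEval L x₀‖ := by
    rw [aux_polyEval_smul, norm_smul, norm_pow, hc, norm_inv, RCLike.norm_ofReal,
      abs_of_nonneg (norm_nonneg x₀)]
  have hgt : 1 < (‖x₀‖⁻¹) ^ k := by
    have h1 : 1 < ‖x₀‖⁻¹ := (one_lt_inv₀ hnpos).2 hlt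
    calc (1:ℝ) < ‖x₀‖⁻¹ := h1
      _ ≤ (‖x₀‖⁻¹) ^ k := le_self_pow₀ h1.le (by omega)
  have hcontra : supNorm (polyEval L) < ‖polyEval L (c • x₀)‖ := by
    rw [hval, ← hM]
    nlinarith [hM ▸ hpos]
  exact absurd (aux_le_supNorm (aux_polyEval_bound L) hyball) (not_le.2 hcontra)

lemma aux_eq_one_of_re {α : 𝕂} (hn : ‖α‖ = 1) (hre : RCLike.re α = 1) : α = 1 := by
  have h := RCLike.norm_sq_eq_def (z := α)
  rw [hn, hre] at h
  have him : RCLike.im α = 0 := by nlinarith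
  apply RCLike.ext
  · rw [hre, RCLike.one_re]
  · rw [him, RCLike.one_im]

end Helpers

/-- `sexp(B_X) = ρ̃𝒫(¹X)` and `ρ̃𝒫(ᵏX) ⊆ ρ̃𝒫(ᵏ⁺¹X)` for every `k ≥ 1`. -/
theorem statement1 {𝕂 X : Type*} [RCLike 𝕂] [NormedAddCommGroup X] [NormedSpace 𝕂 X]
    [CompleteSpace X] :
    (∀ x : X, StronglyExposedPt 𝕂 x ↔ x ∈ polyAttainPts 𝕂 X 1) ∧
      ∀ k : ℕ, 1 ≤ k → polyAttainPts 𝕂 X k ⊆ polyAttainPts 𝕂 X (k + 1) := by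
  constructor
  · intro x
    constructor
    · -- strongly exposed → polyAttainPts 1
      rintro ⟨hball, x', hx'ne, hx'le, hmax, hseq⟩
      set L := (continuousMultilinearCurryFin1 𝕂 X 𝕂).symm x' with hLdef
      have hPL : polyEval L = ⇑x' := by
        funext y; simp [polyEval, hLdef]
      refine ⟨hball, L, ?_, ?_⟩
      · rw [hPL]
        intro h
        exact hx'ne (ContinuousLinearMap.ext fun y => by simpa using congrFun h y)
      · rw [hPL]
        intro xs hxs hten
        set M := RCLike.re (x' x) with hMdef
        have hM0 : 0 ≤ M := by simpa using hmax 0 (by simp)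
        have hnormle : ∀ y ∈ closedBall (0:X) 1, ‖x' y‖ ≤ M := by
          intro y hy
          rcases eq_or_ne (x' y) 0 with h | h
          · rw [h, norm_zero]; exact hM0
          · set θ : 𝕂 := (‖x' y‖ : 𝕂) * (x' y)⁻¹ with hθdef
            have hθ : ‖θ‖ = 1 := by
              rw [hθdef, norm_mul, norm_inv, RCLike.norm_ofReal,
                abs_of_nonneg (norm_nonneg _),
                mul_inv_cancel₀ (norm_ne_zero_iff.2 h)]
            have hsmul : θ • y ∈ closedBall (0:X) 1 := by
              rw [mem_closedBall_zero_iff, norm_smul, hθ, one_mul]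
              exact mem_closedBall_zero_iff.1 hy
            have h2 := hmax (θ • y) hsmul
            rw [map_smul, smul_eq_mul, hθdef, mul_assoc, inv_mul_cancel₀ h,
              mul_one, RCLike.ofReal_re] at h2
            exact h2
        have hMnorm : ‖x' x‖ = M :=
          le_antisymm (hnormle x hball)
            (le_trans (le_abs_self _) (RCLike.abs_re_le_norm _))
        have hsup : supNorm (⇑x') = M :=
          le_antisymm (aux_supNorm_le hnormle) (hMnorm ▸ aux_le_supNorm hnormle hball)
        rw [hsup] at hten
        set αs : ℕ → 𝕂 := fun n =>
          if h : x' (xs n) = 0 then 1 else (‖x' (xs n)‖ : 𝕂) * (x' (xs n))⁻¹ with hαsdef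
        have hαs1 : ∀ n, ‖αs n‖ = 1 := by
          intro n
          rw [hαsdef]
          dsimp only
          split_ifs with h
          · exact norm_one
          · rw [norm_mul, norm_inv, RCLike.norm_ofReal,
              abs_of_nonneg (norm_nonneg _), mul_inv_cancel₀ (norm_ne_zero_iff.2 h)]
        have hαsmul : ∀ n, αs n * x' (xs n) = (‖x' (xs n)‖ : 𝕂) := by
          intro n
          rw [hαsdef]
          dsimp only
          split_ifs with h
          · rw [h]; simp
          · rw [mul_assoc, inv_mul_cancel₀ h, mul_one]
        have hysball : ∀ n, αs n • xs n ∈ closedBall (0:X) 1 := by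
          intro n
          rw [mem_closedBall_zero_iff, norm_smul, hαs1 n, one_mul]
          exact mem_closedBall_zero_iff.1 (hxs n)
        have hre : Tendsto (fun n => RCLike.re (x' (αs n • xs n))) atTop (nhds M) := by
          have heq : (fun n => RCLike.re (x' (αs n • xs n))) = fun n => ‖x' (xs n)‖ := by
            funext n
            rw [map_smul, smul_eq_mul, hαsmul n, RCLike.ofReal_re]
          rw [heq]; exact hten
        have hys : Tendsto (fun n => αs n • xs n) atTop (nhds x) := hseq _ hysball hre
        haveI : ProperSpace 𝕂 := FiniteDimensional.proper_rclike 𝕂 𝕂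
        have hcpt : IsCompact (closedBall (0:𝕂) 1) := isCompact_closedBall _ _
        obtain ⟨α, hαmem, φ, hφ, hαconv⟩ :=
          hcpt.tendsto_subseq (x := αs) (fun n => mem_closedBall_zero_iff.2 (hαs1 n).le)
        have hα1 : ‖α‖ = 1 := by
          have h1 : Tendsto (fun n => ‖αs (φ n)‖) atTop (nhds ‖α‖) :=
            ((continuous_norm.tendsto α).comp hαconv)
          have h2 : Tendsto (fun n => ‖αs (φ n)‖) atTop (nhds 1) := by
            simp only [hαs1]; exact tendsto_const_nhds
          exact tendsto_nhds_unique h1 h2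
        have hαne : α ≠ 0 := by
          intro h; rw [h, norm_zero] at hα1; exact one_ne_zero hα1.symm
        refine ⟨α⁻¹, φ, hφ, by rw [norm_inv, hα1, inv_one], ?_⟩
        have hinv : Tendsto (fun n => (αs (φ n))⁻¹) atTop (nhds α⁻¹) :=
          (hαconv.inv₀ hαne)
        have hys' : Tendsto (fun n => αs (φ n) • xs (φ n)) atTop (nhds x) :=
          hys.comp hφ.tendsto_atTop
        have hcomb : Tendsto (fun n => (αs (φ n))⁻¹ • (αs (φ n) • xs (φ n))) atTop
            (nhds (α⁻¹ • x)) := hinv.smul hys'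
        have heq : (fun n => (αs (φ n))⁻¹ • (αs (φ n) • xs (φ n))) = fun n => xs (φ n) := by
          funext n
          have hne : αs (φ n) ≠ 0 := by
            intro h
            have := hαs1 (φ n)
            rw [h, norm_zero] at this
            exact one_ne_zero this.symm
          rw [inv_smul_smul₀ hne]
        rwa [heq] at hcomb
    · -- polyAttainPts 1 → strongly exposed
      rintro ⟨hball, L, hL, hSA⟩
      set g := continuousMultilinearCurryFin1 𝕂 X 𝕂 L with hgdef
      have hPL : ∀ y : X, polyEval L y = g y := by
        intro y
        rw [hgdef, continuousMultilinearCurryFin1_apply]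
        exact congrArg L (funext fun i => by
          rw [Subsingleton.elim i (Fin.last 0), Fin.snoc_last])
      have hM := aux_strong_norm_eq hSA
      have hpos := aux_supNorm_pos hL
      set M := supNorm (polyEval L) with hMdef
      set c := polyEval L x with hcdef
      have hcnorm : ‖c‖ = M := hM
      have hcne : c ≠ 0 := by
        intro h; rw [h, norm_zero] at hcnorm; linarith
      set x' : X →L[𝕂] 𝕂 := c⁻¹ • g with hx'def
      have hx'apply : ∀ y, x' y = c⁻¹ * polyEval L y := by
        intro y
        rw [hx'def, ContinuousLinearMap.smul_apply, smul_eq_mul, hPL y]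
      have hx'x : x' x = 1 := by
        rw [hx'apply, ← hcdef, inv_mul_cancel₀ hcne]
      have hx'b : ∀ y ∈ closedBall (0:X) 1, ‖x' y‖ ≤ 1 := by
        intro y hy
        rw [hx'apply, norm_mul, norm_inv, hcnorm]
        have h1 : ‖polyEval L y‖ ≤ M := aux_le_supNorm (aux_polyEval_bound L) hy
        calc M⁻¹ * ‖polyEval L y‖ ≤ M⁻¹ * M :=
              mul_le_mul_of_nonneg_left h1 (inv_nonneg.2 hpos.le)
          _ = 1 := inv_mul_cancel₀ (ne_of_gt hpos)
      refine ⟨hball, x', ?_, ?_, ?_, ?_⟩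
      · intro h
        rw [h] at hx'x
        simp at hx'x
      · apply ContinuousLinearMap.opNorm_le_bound _ zero_le_one
        intro y
        rcases eq_or_ne y 0 with rfl | hy
        · simp
        · have hynorm : (0:ℝ) < ‖y‖ := norm_pos_iff.2 hy
          set d : 𝕂 := (‖y‖ : 𝕂)⁻¹ with hddef
          have hdball : d • y ∈ closedBall (0:X) 1 := by
            rw [mem_closedBall_zero_iff, norm_smul, hddef, norm_inv, RCLike.norm_ofReal,
              abs_of_nonneg (norm_nonneg y), inv_mul_cancel₀ (ne_of_gt hynorm)]
          have hb : ‖polyEval L (d • y)‖ ≤ M :=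
            aux_le_supNorm (aux_polyEval_bound L) hdball
          rw [aux_polyEval_smul, pow_one, smul_eq_mul, norm_mul, hddef, norm_inv,
            RCLike.norm_ofReal, abs_of_nonneg (norm_nonneg y)] at hb
          have hgyle : ‖polyEval L y‖ ≤ M * ‖y‖ := by
            have h3 : ‖y‖⁻¹ * ‖polyEval L y‖ * ‖y‖ ≤ M * ‖y‖ :=
              mul_le_mul_of_nonneg_right hb (norm_nonneg y)
            rw [mul_comm (‖y‖⁻¹) _, mul_assoc, inv_mul_cancel₀ (ne_of_gt hynorm),
              mul_one] at h3
            exact h3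
          rw [hx'apply, norm_mul, norm_inv, hcnorm, one_mul]
          calc M⁻¹ * ‖polyEval L y‖ ≤ M⁻¹ * (M * ‖y‖) :=
                mul_le_mul_of_nonneg_left hgyle (inv_nonneg.2 hpos.le)
            _ = ‖y‖ := by field_simp
      · intro y hy
        rw [hx'x, RCLike.one_re]
        exact le_trans (le_trans (le_abs_self _) (RCLike.abs_re_le_norm _)) (hx'b y hy)
      · intro xs hxs hre
        rw [hx'x, RCLike.one_re] at hre
        apply tendsto_of_subseq_tendsto
        intro ns hns
        have hzball : ∀ n, xs (ns n) ∈ closedBall (0:X) 1 := fun n => hxs (ns n)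
        have hre' : Tendsto (fun n => RCLike.re (x' (xs (ns n)))) atTop (nhds 1) :=
          hre.comp hns
        have hnorm1 : Tendsto (fun n => ‖x' (xs (ns n))‖) atTop (nhds 1) := by
          refine tendsto_of_tendsto_of_tendsto_of_le_of_le hre' tendsto_const_nhds
            (fun n => le_trans (le_abs_self _) (RCLike.abs_re_le_norm _))
            (fun n => hx'b _ (hzball n))
        have heqP : ∀ z : X, ‖polyEval L z‖ = M * ‖x' z‖ := by
          intro z
          rw [hx'apply, norm_mul, norm_inv, hcnorm]
          field_simp
        have hPten : Tendsto (fun n => ‖polyEval L (xs (ns n))‖) atTop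
            (nhds (supNorm (polyEval L))) := by
          simp only [heqP]
          rw [← hMdef]
          have h4 := hnorm1.const_mul M
          simpa using h4
        obtain ⟨α, φ, hφ, hα, hconv⟩ := hSA _ hzball hPten
        have hx'conv : Tendsto (fun n => x' (xs (ns (φ n)))) atTop
            (nhds (x' (α • x))) := (x'.continuous.tendsto _).comp hconv
        have hx'val : x' (α • x) = α := by
          rw [map_smul, hx'x, smul_eq_mul, mul_one]
        have hreα : RCLike.re α = 1 := by
          have h1 : Tendsto (fun n => RCLike.re (x' (xs (ns (φ n))))) atTop
              (nhds (RCLike.re α)) := by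
            have := (RCLike.continuous_re.tendsto _).comp hx'conv
            rwa [hx'val] at this
          exact tendsto_nhds_unique h1 (hre'.comp hφ.tendsto_atTop)
        have hα1 : α = 1 := aux_eq_one_of_re hα hreα
        exact ⟨φ, by rwa [hα1, one_smul] at hconv⟩
  · -- ρ̃𝒫(ᵏX) ⊆ ρ̃𝒫(ᵏ⁺¹X)
    intro k hk x₀ hx₀
    obtain ⟨hball, L, hL, hSA⟩ := hx₀
    have hM := aux_strong_norm_eq hSA
    have hpos := aux_supNorm_pos hL
    have hx₀ne : x₀ ≠ 0 := by
      intro h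
      have h0 : polyEval L x₀ = 0 := by
        rw [h]
        exact L.map_coord_zero ⟨0, hk⟩ rfl
      rw [h0, norm_zero] at hM
      linarith
    have hn1 : ‖x₀‖ = 1 := aux_norm_x₀_one hk hL hSA hball
    obtain ⟨x', hx'norm, hx'x₀⟩ := exists_dual_vector 𝕂 x₀ (norm_ne_zero_iff.2 hx₀ne)
    have hx'x₀1 : x' x₀ = 1 := by rw [hx'x₀, hn1, RCLike.ofReal_one]
    set L' : ContinuousMultilinearMap 𝕂 (fun _ : Fin (k+1) => X) 𝕂 :=
      ContinuousMultilinearMap.uncurryRight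
        (((ContinuousLinearMap.id 𝕂 𝕂).smulRight x').compContinuousMultilinearMap L)
      with hL'def
    have hQ : ∀ y : X, polyEval L' y = polyEval L y * x' y := by
      intro y
      rfl
    have hx'b : ∀ y ∈ closedBall (0:X) 1, ‖x' y‖ ≤ 1 := by
      intro y hy
      calc ‖x' y‖ ≤ ‖x'‖ * ‖y‖ := x'.le_opNorm y
        _ ≤ 1 * 1 :=
          mul_le_mul hx'norm.le (mem_closedBall_zero_iff.1 hy) (norm_nonneg _) zero_le_one
        _ = 1 := mul_one 1
    have hQx₀ : polyEval L' x₀ = polyEval L x₀ := by rw [hQ, hx'x₀1, mul_one]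
    have hbound : ∀ y ∈ closedBall (0:X) 1, ‖polyEval L' y‖ ≤ supNorm (polyEval L) := by
      intro y hy
      rw [hQ, norm_mul]
      have h1 : ‖polyEval L y‖ ≤ supNorm (polyEval L) :=
        aux_le_supNorm (aux_polyEval_bound L) hy
      calc ‖polyEval L y‖ * ‖x' y‖ ≤ supNorm (polyEval L) * 1 :=
            mul_le_mul h1 (hx'b y hy) (norm_nonneg _) hpos.le
        _ = supNorm (polyEval L) := mul_one _
    have hsupQ : supNorm (polyEval L') = supNorm (polyEval L) := by
      refine le_antisymm (aux_supNorm_le hbound) ?_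
      calc supNorm (polyEval L) = ‖polyEval L' x₀‖ := by rw [hQx₀, hM]
        _ ≤ supNorm (polyEval L') := aux_le_supNorm hbound hball
    refine ⟨hball, L', ?_, ?_⟩
    · intro h
      have h0 : polyEval L' x₀ = 0 := congrFun h x₀
      rw [hQx₀] at h0
      rw [h0, norm_zero] at hM
      linarith
    · intro xs hxs hten
      rw [hsupQ] at hten
      have hPle : ∀ n, ‖polyEval L (xs n)‖ ≤ supNorm (polyEval L) := fun n =>
        aux_le_supNorm (aux_polyEval_bound L) (hxs n)
      have hQleP : ∀ n, ‖polyEval L' (xs n)‖ ≤ ‖polyEval L (xs n)‖ := by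
        intro n
        rw [hQ, norm_mul]
        calc ‖polyEval L (xs n)‖ * ‖x' (xs n)‖ ≤ ‖polyEval L (xs n)‖ * 1 :=
              mul_le_mul_of_nonneg_left (hx'b _ (hxs n)) (norm_nonneg _)
          _ = ‖polyEval L (xs n)‖ := mul_one _
      have hPten : Tendsto (fun n => ‖polyEval L (xs n)‖) atTop
          (nhds (supNorm (polyEval L))) :=
        tendsto_of_tendsto_of_tendsto_of_le_of_le hten tendsto_const_nhds hQleP hPle
      exact hSA xs hxs hPten
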